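/- Suppose two jump points s₁ < s₂ are added into one open interval I_{α₀} = (t_{α₀}, t_{α₀+1}) of the original partition, producing subintervals I¹ = (t_{α₀},s₁), I² = (s₁,s₂), I³ = (s₂,t_{α₀+1}), I⁴ = {s₁}, I⁵ = {s₂}. Let σ be a bijection of ℝ with both 𝒜 and 𝒜_S invariant under σ and σ⁻¹, and assume σ(I¹) = I², σ(I²) = I³, σ(I³) = I¹, σ(I⁴) = I⁴, σ(I⁵) = I⁵. Then for every n ∈ ℤ: Sepⁿ_{𝒜_S}(ℝ) = Sepⁿ_𝒜(ℝ) if 3 ∣ n, and Sepⁿ_{𝒜_S}(ℝ) = Sepⁿ_𝒜(ℝ) ∪ (I¹ ∪ I² ∪ I³) if 3 ∤ n. Consequently 𝒜_S′ = 𝒜′ \ {Σₙ fₙδⁿ ∈ 𝒜′ : fₙ does not vanish identically on I¹ ∪ I² ∪ I³ for some n with 3 ∤ n}. -/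

import Mathlib

open scoped Classical

noncomputable section

namespace PaperTRS

/-- The algebra of complex valued functions constant on each set of the family `P`. -/
def partAlg {X J : Type*} (P : J → Set X) : Subalgebra ℂ (X → ℂ) where
  carrier := {h | ∀ i, ∀ x ∈ P i, ∀ y ∈ P i, h x = h y}
  mul_mem' := by
    intro a b ha hb i x hx y hy
    simp only [Pi.mul_apply, ha i x hx y hy, hb i x hx y hy]
  add_mem' := by
    intro a b ha hb i x hx y hy
    simp only [Pi.add_apply, ha i x hx y hy, hb i x hx y hy]
  algebraMap_mem' := by intro r i x hx y hy; rfl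

/-- Piecewise constant functions on `ℝ` whose jumps all lie in the set `T`. -/
def pcAlgOn (T : Set ℝ) : Subalgebra ℂ (ℝ → ℂ) where
  carrier := {h | ∀ x y : ℝ, x ∉ T → y ∉ T →
    (∀ u ∈ T, u ∉ Set.Icc (min x y) (max x y)) → h x = h y}
  mul_mem' := by
    intro a b ha hb x y hx hy hxy
    simp only [Pi.mul_apply, ha x y hx hy hxy, hb x y hx hy hxy]
  add_mem' := by
    intro a b ha hb x y hx hy hxy
    simp only [Pi.add_apply, ha x y hx hy hxy, hb x y hx hy hxy]
  algebraMap_mem' := by intro r x y _ _ _; rfl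

/-- Invariance of an algebra of functions under a self-map of `X`. -/
def AlgInvariant {X : Type*} (A : Subalgebra ℂ (X → ℂ)) (σ : X → X) : Prop :=
  ∀ h ∈ A, (h ∘ σ) ∈ A

/-- `Sep A σ n = {x | ∃ h ∈ A, h x ≠ σ̃ⁿ(h) x}`, where `σ̃ⁿ(h) = h ∘ σ⁻ⁿ`. -/
def Sep {X : Type*} (A : Subalgebra ℂ (X → ℂ)) (σ : Equiv.Perm X) (n : ℤ) : Set X :=
  {x | ∃ h ∈ A, h x ≠ h ((σ ^ n)⁻¹ x)}

/-- Twisted convolution product on the crossed product `⋊ ℤ`: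
`(fₙ δⁿ) * (gₘ δᵐ) = fₙ · σ̃ⁿ(gₘ) · δ^{n+m}` extended bilinearly. -/
def cmul {X : Type*} (σ : Equiv.Perm X) (f g : ℤ →₀ (X → ℂ)) : ℤ →₀ (X → ℂ) :=
  f.sum fun n a => g.sum fun m b =>
    Finsupp.single (n + m) (fun x => a x * b ((σ ^ n)⁻¹ x))

/-- Membership of an element `Σ fₙ δⁿ` in the crossed product of the algebra `B` with `ℤ`. -/
def InCrossed {X : Type*} (B : Subalgebra ℂ (X → ℂ)) (f : ℤ →₀ (X → ℂ)) : Prop :=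
  ∀ n, f n ∈ B

/-- The commutant of `A` inside the crossed product `B ⋊ ℤ` (where `A ⊆ B`). -/
def commutant {X : Type*} (A B : Subalgebra ℂ (X → ℂ)) (σ : Equiv.Perm X) :
    Set (ℤ →₀ (X → ℂ)) :=
  {f | InCrossed B f ∧
    ∀ a ∈ A, cmul σ f (Finsupp.single 0 a) = cmul σ (Finsupp.single 0 a) f}

/-- The jump points `t₁ < ⋯ < t_N` extended by `t₀ = -∞` and `t_{N+1} = +∞`. -/
def tE (N : ℕ) (t : Fin N → ℝ) (i : ℕ) : EReal :=
  if h : 1 ≤ i ∧ i ≤ N then ((t ⟨i - 1, by omega⟩ : ℝ) : EReal)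
  else if i = 0 then ⊥ else ⊤

/-- The open interval `I_i = (t_i, t_{i+1})` for `0 ≤ i ≤ N`. -/
def openPiece (N : ℕ) (t : Fin N → ℝ) (i : ℕ) : Set ℝ :=
  {x : ℝ | tE N t i < (x : EReal) ∧ (x : EReal) < tE N t (i + 1)}

/-- The sets of the partition of `ℝ` determined by the jump points: the open
intervals `I_0, …, I_N` together with the singletons `{t_i}`. -/
def pieces (N : ℕ) (t : Fin N → ℝ) : Set (Set ℝ) :=
  {P | (∃ i : ℕ, i ≤ N ∧ P = openPiece N t i) ∨ (∃ i : Fin N, P = {t i})}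

/-- `C_k`: points `x` such that `k` is the smallest positive integer with `x` and
`σᵏ(x)` in one common set of the partition. -/
def Ck (N : ℕ) (t : Fin N → ℝ) (σ : Equiv.Perm ℝ) (k : ℕ) : Set ℝ :=
  {x | IsLeast {j : ℕ | 0 < j ∧ ∃ P ∈ pieces N t, x ∈ P ∧ (σ ^ j) x ∈ P} k}

end PaperTRS
namespace PaperTRS

/-- With `p` points `s i 0 < ⋯ < s i (p-1)` added in the interval `I_{α i}`, the `j`-th
open subinterval of the refined partition of `I_{α i}`, for `j = 0, …, p`. -/
def subPiece (N : ℕ) (t : Fin N → ℝ) {k p : ℕ} (α : Fin k → ℕ)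
    (s : Fin k → Fin p → ℝ) (i : Fin k) (j : Fin (p + 1)) : Set ℝ :=
  {x : ℝ |
    (if hj : (j : ℕ) = 0 then tE N t (α i)
      else ((s i ⟨(j : ℕ) - 1, by have := j.isLt; omega⟩ : ℝ) : EReal)) < (x : EReal) ∧
    (x : EReal) <
      (if hj : (j : ℕ) = p then tE N t (α i + 1)
        else ((s i ⟨(j : ℕ), by have := j.isLt; omega⟩ : ℝ) : EReal))}

/-- The sets of the refined partition of the union of the intervals `I_{α i}`: the open
subintervals determined by the added jump points together with the singleton jump points. -/
def cyclePieces (N : ℕ) (t : Fin N → ℝ) {k p : ℕ} (α : Fin k → ℕ)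
    (s : Fin k → Fin p → ℝ) : Set (Set ℝ) :=
  {P | (∃ i j, P = subPiece N t α s i j) ∨ (∃ i j, P = ({s i j} : Set ℝ))}

/-- `C̃_r`: points `x` of `⋃ᵢ I_{α i}` such that `r` is the smallest positive integer with
`x` and `σʳ(x)` in one common set of the refined partition. -/
def Ctil (N : ℕ) (t : Fin N → ℝ) (σ : Equiv.Perm ℝ) {k p : ℕ} (α : Fin k → ℕ)
    (s : Fin k → Fin p → ℝ) (r : ℕ) : Set ℝ :=
  {x | x ∈ ⋃ i, openPiece N t (α i) ∧
    IsLeast {j : ℕ | 0 < j ∧ ∃ P ∈ cyclePieces N t α s, x ∈ P ∧ (σ ^ j) x ∈ P} r}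

/-- The cyclic setup: `k` pairwise distinct open intervals `I_{α 0}, …, I_{α (k-1)}` of the
original partition, contained in `C_k` and permuted cyclically by `σ`, with `p` jump points
`s i 0 < ⋯ < s i (p-1)` added into each of them, and both the original algebra `𝒜` and the
refined algebra `𝒜_S` invariant under `σ` and `σ⁻¹`. -/
def CyclicSetup (N : ℕ) (t : Fin N → ℝ) (σ : Equiv.Perm ℝ) {k p : ℕ} (α : Fin k → ℕ)
    (s : Fin k → Fin p → ℝ) : Prop :=
  0 < k ∧ (∀ i, α i ≤ N) ∧ Function.Injective α ∧
  (∀ i j, s i j ∈ openPiece N t (α i)) ∧ (∀ i, StrictMono (s i)) ∧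
  (∀ i : Fin k, ∃ i' : Fin k, ((i' : ℕ) = ((i : ℕ) + 1) % k) ∧
    σ '' openPiece N t (α i) = openPiece N t (α i')) ∧
  (∀ i, openPiece N t (α i) ⊆ Ck N t σ k) ∧
  AlgInvariant (pcAlgOn (Set.range t)) σ ∧
  AlgInvariant (pcAlgOn (Set.range t)) σ.symm ∧
  AlgInvariant (pcAlgOn (Set.range t ∪ ⋃ i, Set.range (s i))) σ ∧
  AlgInvariant (pcAlgOn (Set.range t ∪ ⋃ i, Set.range (s i))) σ.symm

/-- `C_k` for the partition `P` of a general set `X`. -/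
def CkGen {X ι : Type*} (P : ι → Set X) (σ : Equiv.Perm X) (k : ℕ) : Set X :=
  {x | IsLeast {j : ℕ | 0 < j ∧ ∃ i, x ∈ P i ∧ (σ ^ j) x ∈ P i} k}

/-- `C̃_r` relative to a family `Q` of refined pieces inside the subset `base` of `X`. -/
def CtilGen {X ι : Type*} (σ : Equiv.Perm X) (Q : ι → Set X) (base : Set X) (r : ℕ) :
    Set X :=
  {x | x ∈ base ∧ IsLeast {j : ℕ | 0 < j ∧ ∃ i, x ∈ Q i ∧ (σ ^ j) x ∈ Q i} r}

/-- `C_∞`: points that never return to the partition set they lie in. -/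
def Cinf {X ι : Type*} (P : ι → Set X) (σ : Equiv.Perm X) : Set X :=
  {x | ∀ k : ℕ, 0 < k → ¬∃ i, x ∈ P i ∧ (σ ^ k) x ∈ P i}

end PaperTRS
namespace PaperTRS

/-- Two points lie in a common "gap" of the jump set `T` (or are equal). -/
def SameGap (T : Set ℝ) (x y : ℝ) : Prop :=
  x = y ∨ (x ∉ T ∧ y ∉ T ∧ ∀ u ∈ T, u ∉ Set.Icc (min x y) (max x y))

lemma sameGap_mono {T T' : Set ℝ} (h : T ⊆ T') {x y : ℝ} (hg : SameGap T' x y) :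
    SameGap T x y := by
  rcases hg with rfl | ⟨hx, hy, hu⟩
  · exact Or.inl rfl
  · exact Or.inr ⟨fun c => hx (h c), fun c => hy (h c), fun u hu' => hu u (h hu')⟩

lemma not_sameGap_of_sep {T : Set ℝ} {x y u : ℝ} (hxy : x ≠ y) (hu : u ∈ T)
    (h1 : min x y ≤ u) (h2 : u ≤ max x y) : ¬ SameGap T x y := by
  rintro (rfl | ⟨-, -, hall⟩)
  · exact hxy rfl
  · exact hall u hu ⟨h1, h2⟩

lemma sameGap_apply {T : Set ℝ} {x y : ℝ} (hg : SameGap T x y) {h : ℝ → ℂ}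
    (hh : h ∈ pcAlgOn T) : h x = h y := by
  rcases hg with rfl | ⟨hx, hy, hu⟩
  · rfl
  · exact hh x y hx hy hu

lemma mem_sep_iff (T : Set ℝ) (σ : Equiv.Perm ℝ) (n : ℤ) (x : ℝ) :
    x ∈ Sep (pcAlgOn T) σ n ↔ ¬ SameGap T x ((σ ^ n)⁻¹ x) := by
  set y := (σ ^ n)⁻¹ x with hy
  constructor
  · rintro ⟨h, hh, hne⟩ hg
    exact hne (sameGap_apply hg hh)
  · intro hns
    by_cases hxy : x = y
    · exact absurd (Or.inl hxy) hns
    by_cases hxT : x ∈ T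
    · refine ⟨fun z => if z = x then 1 else 0, ?_, ?_⟩
      · intro a b ha hb _
        simp only [if_neg (fun h : a = x => ha (h ▸ hxT)),
          if_neg (fun h : b = x => hb (h ▸ hxT))]
      · simp only [if_pos rfl, if_neg (fun h : y = x => hxy h.symm)]
        rw [if_neg (show ¬ (σ ^ n)⁻¹ x = x from fun h => hxy h.symm)]
        exact one_ne_zero
    by_cases hyT : y ∈ T
    · refine ⟨fun z => if z = y then 1 else 0, ?_, ?_⟩
      · intro a b ha hb _
        simp only [if_neg (fun h : a = y => ha (h ▸ hyT)),
          if_neg (fun h : b = y => hb (h ▸ hyT))]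
      · simp only [if_neg hxy, if_pos rfl]
        rw [if_pos (show (σ ^ n)⁻¹ x = y from rfl)]
        exact zero_ne_one
    · have hex : ∃ u ∈ T, u ∈ Set.Icc (min x y) (max x y) := by
        by_contra hno
        push_neg at hno
        exact hns (Or.inr ⟨hxT, hyT, hno⟩)
      obtain ⟨u, huT, hu1, hu2⟩ := hex
      refine ⟨fun z => if z < u then 1 else 0, ?_, ?_⟩
      · intro a b ha hb hab
        by_cases h1 : a < u <;> by_cases h2 : b < u <;> simp only [if_pos, if_neg, h1, h2]
        · exact absurd ⟨le_trans (min_le_left a b) h1.le, le_trans (not_lt.mp h2) (le_max_right a b)⟩ (hab u huT)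
        · exact absurd ⟨le_trans (min_le_right a b) h2.le, le_trans (not_lt.mp h1) (le_max_left a b)⟩ (hab u huT)
      · have hxu : x ≠ u := fun h => hxT (h ▸ huT)
        have hyu : y ≠ u := fun h => hyT (h ▸ huT)
        rcases le_total x y with hle | hle
        · rw [min_eq_left hle] at hu1; rw [max_eq_right hle] at hu2
          simp only [if_pos (lt_of_le_of_ne hu1 hxu), if_neg (not_lt.mpr (lt_of_le_of_ne hu2 (Ne.symm hyu)).le)]
          rw [if_neg (show ¬ (σ ^ n)⁻¹ x < u from not_lt.mpr (lt_of_le_of_ne hu2 (Ne.symm hyu)).le)]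
          exact one_ne_zero
        · rw [min_eq_right hle] at hu1; rw [max_eq_left hle] at hu2
          simp only [if_neg (not_lt.mpr (lt_of_le_of_ne hu2 (Ne.symm hxu)).le), if_pos (lt_of_le_of_ne hu1 hyu)]
          rw [if_pos (show (σ ^ n)⁻¹ x < u from lt_of_le_of_ne hu1 hyu)]
          exact zero_ne_one

lemma sameGap_comm {T : Set ℝ} {x y : ℝ} (h : SameGap T x y) : SameGap T y x := by
  rcases h with rfl | ⟨hx, hy, hu⟩
  · exact Or.inl rfl
  · exact Or.inr ⟨hy, hx, by rwa [min_comm, max_comm]⟩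
lemma sum_single_eval {X : Type*} (f : ℤ →₀ (X → ℂ)) (g : ℤ → (X → ℂ) → (X → ℂ))
    (hg : ∀ n, g n 0 = 0) (m : ℤ) :
    (f.sum fun n fn => Finsupp.single n (g n fn)) m = g m (f m) := by
  classical
  rw [Finsupp.sum_apply]
  rw [Finsupp.sum]
  simp only [Finsupp.single_apply]
  rw [Finset.sum_ite_eq' f.support m (fun n => g n (f n))]
  by_cases hm : m ∈ f.support
  · rw [if_pos hm]
  · rw [if_neg hm, Finsupp.notMem_support_iff.mp hm, hg]

lemma cmul_single_right {X : Type*} (σ : Equiv.Perm X) (f : ℤ →₀ (X → ℂ)) (a : X → ℂ)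
    (m : ℤ) :
    cmul σ f (Finsupp.single 0 a) m = fun x => f m x * a ((σ ^ m)⁻¹ x) := by
  classical
  unfold cmul
  have : ∀ n : ℤ, ∀ fn : X → ℂ,
      ((Finsupp.single 0 a).sum fun k b =>
        Finsupp.single (n + k) (fun x => fn x * b ((σ ^ n)⁻¹ x))) =
      Finsupp.single n (fun x => fn x * a ((σ ^ n)⁻¹ x)) := by
    intro n fn
    rw [Finsupp.sum_single_index]
    · rw [add_zero]
    · simp only [Pi.zero_apply, mul_zero]
      rw [show (fun _ : X => (0:ℂ)) = (0 : X → ℂ) from rfl, Finsupp.single_zero]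
  simp only [this]
  exact sum_single_eval f (fun n fn => fun x => fn x * a ((σ ^ n)⁻¹ x))
    (fun n => by funext x; simp) m

lemma cmul_single_left {X : Type*} (σ : Equiv.Perm X) (f : ℤ →₀ (X → ℂ)) (a : X → ℂ)
    (m : ℤ) :
    cmul σ (Finsupp.single 0 a) f m = fun x => a x * f m x := by
  classical
  unfold cmul
  rw [Finsupp.sum_single_index]
  · simp only [zero_add, zpow_zero, inv_one, Equiv.Perm.coe_one, id_eq]
    exact sum_single_eval f (fun n fn => fun x => a x * fn x)
      (fun n => by funext x; simp) m
  · have : ∀ k : ℤ, ∀ fk : X → ℂ,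
        Finsupp.single (0 + k) (fun x => (0 : X → ℂ) x * fk ((σ ^ (0:ℤ))⁻¹ x)) =
          (0 : ℤ →₀ (X → ℂ)) := by
      intro k fk
      simp only [Pi.zero_apply, zero_mul]
      rw [show (fun _ : X => (0:ℂ)) = (0 : X → ℂ) from rfl, Finsupp.single_zero]
    simp only [this, Finsupp.sum, Finset.sum_const_zero]

lemma commutant_eq_vanish {X : Type*} (A B : Subalgebra ℂ (X → ℂ)) (σ : Equiv.Perm X) :
    commutant A B σ =
      {f | InCrossed B f ∧ ∀ n : ℤ, ∀ x ∈ Sep A σ n, f n x = 0} := by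
  classical
  ext f
  constructor
  · rintro ⟨hic, hc⟩
    refine ⟨hic, fun n x hx => ?_⟩
    obtain ⟨h, hA, hne⟩ := hx
    have e := congrFun (congrArg (fun g : ℤ →₀ (X → ℂ) => g n) (hc h hA)) x
    simp only [cmul_single_right, cmul_single_left] at e
    rcases mul_eq_zero.mp (show f n x * (h ((σ ^ n)⁻¹ x) - h x) = 0 by
      rw [mul_sub, e]; ring) with h0 | h0
    · exact h0
    · exact absurd (sub_eq_zero.mp h0).symm hne
  · rintro ⟨hic, hv⟩
    refine ⟨hic, fun a ha => ?_⟩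
    apply Finsupp.ext
    intro m
    rw [cmul_single_right, cmul_single_left]
    funext x
    by_cases hx : x ∈ Sep A σ m
    · rw [hv m x hx]; ring
    · have : a x = a ((σ ^ m)⁻¹ x) := by
        by_contra hne
        exact hx ⟨a, ha, hne⟩
      rw [← this]; ring
/-- two jump points `s₁ < s₂` added into one interval `I_{α₀}`, with the three
open subintervals permuted in a 3-cycle by `σ` and the two jump points fixed. Then
`Sepⁿ_{𝒜_S} = Sepⁿ_𝒜` if `3 ∣ n` and `Sepⁿ_{𝒜_S} = Sepⁿ_𝒜 ∪ (I¹ ∪ I² ∪ I³)` if `3 ∤ n`;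
consequently `𝒜_S' = 𝒜' \ {Σ fₙδⁿ : fₙ ≢ 0 on I¹ ∪ I² ∪ I³ for some n with 3 ∤ n}`. -/
theorem statement17 (N : ℕ) (t : Fin N → ℝ) (ht : StrictMono t)
    (a0 : ℕ) (ha0 : a0 ≤ N) (s1 s2 : ℝ) (hs12 : s1 < s2)
    (hs1 : s1 ∈ openPiece N t a0) (hs2 : s2 ∈ openPiece N t a0)
    (I1 I2 I3 : Set ℝ)
    (hI1 : I1 = {x : ℝ | tE N t a0 < (x : EReal) ∧ x < s1})
    (hI2 : I2 = Set.Ioo s1 s2)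
    (hI3 : I3 = {x : ℝ | s2 < x ∧ (x : EReal) < tE N t (a0 + 1)})
    (σ : Equiv.Perm ℝ)
    (h1 : AlgInvariant (pcAlgOn (Set.range t)) σ)
    (h2 : AlgInvariant (pcAlgOn (Set.range t)) σ.symm)
    (h3 : AlgInvariant (pcAlgOn (Set.range t ∪ {s1, s2})) σ)
    (h4 : AlgInvariant (pcAlgOn (Set.range t ∪ {s1, s2})) σ.symm)
    (hm1 : σ '' I1 = I2) (hm2 : σ '' I2 = I3) (hm3 : σ '' I3 = I1)
    (hm4 : σ s1 = s1) (hm5 : σ s2 = s2) :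
    (∀ n : ℤ,
      ((3 : ℤ) ∣ n →
        Sep (pcAlgOn (Set.range t ∪ {s1, s2})) σ n = Sep (pcAlgOn (Set.range t)) σ n) ∧
      (¬((3 : ℤ) ∣ n) →
        Sep (pcAlgOn (Set.range t ∪ {s1, s2})) σ n =
          Sep (pcAlgOn (Set.range t)) σ n ∪ (I1 ∪ I2 ∪ I3))) ∧
    commutant (pcAlgOn (Set.range t ∪ {s1, s2})) (pcAlgOn (Set.range t ∪ {s1, s2})) σ =
      commutant (pcAlgOn (Set.range t)) (pcAlgOn (Set.range t ∪ {s1, s2})) σ \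
        {f : ℤ →₀ (ℝ → ℂ) | ∃ n : ℤ, ¬((3 : ℤ) ∣ n) ∧
          ¬(∀ x ∈ I1 ∪ I2 ∪ I3, f n x = 0)} := by
  classical
  -- basic tE facts
  have tE_eq : ∀ i : ℕ, 1 ≤ i → i ≤ N → ∀ (h : i - 1 < N),
      tE N t i = ((t ⟨i - 1, h⟩ : ℝ) : EReal) := by
    intro i h1 h2 h
    rw [tE, dif_pos ⟨h1, h2⟩]
  have tE_bot : tE N t 0 = ⊥ := by rw [tE, dif_neg (by omega), if_pos rfl]
  -- subinterval inclusions
  have hI1sub : I1 ⊆ openPiece N t a0 := by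
    rw [hI1]; rintro x ⟨hx1, hx2⟩
    exact ⟨hx1, lt_trans (EReal.coe_lt_coe_iff.mpr hx2) hs1.2⟩
  have hI2sub : I2 ⊆ openPiece N t a0 := by
    rw [hI2]; rintro x ⟨hx1, hx2⟩
    exact ⟨lt_trans hs1.1 (EReal.coe_lt_coe_iff.mpr hx1),
      lt_trans (EReal.coe_lt_coe_iff.mpr hx2) hs2.2⟩
  have hI3sub : I3 ⊆ openPiece N t a0 := by
    rw [hI3]; rintro x ⟨hx1, hx2⟩
    exact ⟨lt_trans hs2.1 (EReal.coe_lt_coe_iff.mpr hx1), hx2⟩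
  have hUsub : I1 ∪ I2 ∪ I3 ⊆ openPiece N t a0 :=
    Set.union_subset (Set.union_subset hI1sub hI2sub) hI3sub
  -- no jump point of t lies in the open piece
  have ht_not : ∀ u ∈ Set.range t, u ∉ openPiece N t a0 := by
    rintro u ⟨i, rfl⟩ ⟨hl, hr⟩
    have hN : 0 < N := i.pos
    by_cases h0 : a0 = 0
    · subst h0
      rw [tE_eq 1 le_rfl hN (by omega)] at hr
      have := EReal.coe_lt_coe_iff.mp hr
      have hi := ht.lt_iff_lt.mp this
      simp only [Fin.lt_def, Fin.val_mk] at hi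
      omega
    · have ha1 : 1 ≤ a0 := by omega
      rw [tE_eq a0 ha1 ha0 (by omega)] at hl
      have hl' := ht.lt_iff_lt.mp (EReal.coe_lt_coe_iff.mp hl)
      simp only [Fin.lt_def, Fin.val_mk] at hl'
      by_cases hN' : a0 = N
      · have := i.isLt; omega
      · rw [tE_eq (a0 + 1) (by omega) (by omega) (by omega)] at hr
        have hr' := ht.lt_iff_lt.mp (EReal.coe_lt_coe_iff.mp hr)
        simp only [Fin.lt_def, Fin.val_mk] at hr'
        omega
  -- convexity of the open piece
  have hconv : ∀ x ∈ openPiece N t a0, ∀ z ∈ openPiece N t a0, ∀ u : ℝ,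
      min x z ≤ u → u ≤ max x z → u ∈ openPiece N t a0 := by
    intro x hx z hz u h1 h2
    constructor
    · have hm : tE N t a0 < ((min x z : ℝ) : EReal) := by
        rcases min_cases x z with ⟨h, -⟩ | ⟨h, -⟩ <;> rw [h]
        · exact hx.1
        · exact hz.1
      exact lt_of_lt_of_le hm (EReal.coe_le_coe_iff.mpr h1)
    · have hm : ((max x z : ℝ) : EReal) < tE N t (a0 + 1) := by
        rcases max_cases x z with ⟨h, -⟩ | ⟨h, -⟩ <;> rw [h]
        · exact hx.2
        · exact hz.2
      exact lt_of_le_of_lt (EReal.coe_le_coe_iff.mpr h2) hm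
  -- covering of the open piece
  have hcover : ∀ x ∈ openPiece N t a0, x ∈ I1 ∪ I2 ∪ I3 ∨ x = s1 ∨ x = s2 := by
    intro x hx
    rcases lt_trichotomy x s1 with h | h | h
    · exact Or.inl (Or.inl (Or.inl (by rw [hI1]; exact ⟨hx.1, h⟩)))
    · exact Or.inr (Or.inl h)
    · rcases lt_trichotomy x s2 with h' | h' | h'
      · exact Or.inl (Or.inl (Or.inr (by rw [hI2]; exact ⟨h, h'⟩)))
      · exact Or.inr (Or.inr h')
      · exact Or.inl (Or.inr (by rw [hI3]; exact ⟨h', hx.2⟩))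
  -- bounds
  have hb1 : ∀ x ∈ I1, x < s1 := by intro x hx; rw [hI1] at hx; exact hx.2
  have hb2 : ∀ x ∈ I2, s1 < x ∧ x < s2 := by intro x hx; rwa [hI2] at hx
  have hb3 : ∀ x ∈ I3, s2 < x := by intro x hx; rw [hI3] at hx; exact hx.1
  -- points of the subintervals avoid the enlarged jump set
  have hnotTS : ∀ x ∈ I1 ∪ I2 ∪ I3, x ∉ Set.range t ∪ ({s1, s2} : Set ℝ) := by
    intro x hx hmem
    rcases hmem with hr | hs
    · exact ht_not x hr (hUsub hx)
    · simp only [Set.mem_insert_iff, Set.mem_singleton_iff] at hs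
      rcases hx with (h | h) | h
      · have := hb1 x h; rcases hs with rfl | rfl <;> linarith
      · have := hb2 x h; rcases hs with rfl | rfl <;> linarith [this.1, this.2]
      · have := hb3 x h; rcases hs with rfl | rfl <;> linarith
  -- two points in the same subinterval are in the same gap of the refined partition
  have hsame : ∀ x y : ℝ, ((x ∈ I1 ∧ y ∈ I1) ∨ (x ∈ I2 ∧ y ∈ I2) ∨ (x ∈ I3 ∧ y ∈ I3)) →
      SameGap (Set.range t ∪ ({s1, s2} : Set ℝ)) x y := by
    intro x y hc
    have hxU : x ∈ I1 ∪ I2 ∪ I3 := by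
      rcases hc with ⟨h, -⟩ | ⟨h, -⟩ | ⟨h, -⟩
      exacts [Or.inl (Or.inl h), Or.inl (Or.inr h), Or.inr h]
    have hyU : y ∈ I1 ∪ I2 ∪ I3 := by
      rcases hc with ⟨-, h⟩ | ⟨-, h⟩ | ⟨-, h⟩
      exacts [Or.inl (Or.inl h), Or.inl (Or.inr h), Or.inr h]
    refine Or.inr ⟨hnotTS x hxU, hnotTS y hyU, ?_⟩
    rintro u hu ⟨hu1, hu2⟩
    rcases hu with hr | hs
    · exact ht_not u hr (hconv x (hUsub hxU) y (hUsub hyU) u hu1 hu2)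
    · simp only [Set.mem_insert_iff, Set.mem_singleton_iff] at hs
      rcases hs with rfl | rfl
      · rcases hc with ⟨h1, h2⟩ | ⟨h1, h2⟩ | ⟨h1, h2⟩
        · have := max_lt (hb1 x h1) (hb1 y h2); linarith
        · have := lt_min (hb2 x h1).1 (hb2 y h2).1; linarith
        · have := lt_min (hb3 x h1) (hb3 y h2); linarith
      · rcases hc with ⟨h1, h2⟩ | ⟨h1, h2⟩ | ⟨h1, h2⟩
        · have := max_lt (hb1 x h1) (hb1 y h2); linarith
        · have := max_lt (hb2 x h1).2 (hb2 y h2).2; linarith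
        · have := lt_min (hb3 x h1) (hb3 y h2); linarith
  -- a jump point strictly between two points separates them
  have hsep_mid : ∀ u ∈ Set.range t ∪ ({s1, s2} : Set ℝ), ∀ x y : ℝ, x < u → u < y →
      ¬ SameGap (Set.range t ∪ ({s1, s2} : Set ℝ)) x y := by
    intro u hu x y h1 h2
    exact not_sameGap_of_sep (ne_of_lt (h1.trans h2)) hu
      ((min_le_left x y).trans h1.le) (h2.le.trans (le_max_right x y))
  -- the cyclic dynamics on the three subintervals
  set J : ℤ → Set ℝ := fun z => if z % 3 = 0 then I1 else if z % 3 = 1 then I2 else I3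
    with hJdef
  have hJ0 : ∀ z : ℤ, z % 3 = 0 → J z = I1 := by
    intro z h; simp only [hJdef]; rw [if_pos h]
  have hJ1 : ∀ z : ℤ, z % 3 = 1 → J z = I2 := by
    intro z h; simp only [hJdef]; rw [if_neg (by omega), if_pos h]
  have hJ2 : ∀ z : ℤ, z % 3 = 2 → J z = I3 := by
    intro z h; simp only [hJdef]; rw [if_neg (by omega), if_neg (by omega)]
  have hJsub : ∀ z : ℤ, J z ⊆ openPiece N t a0 := by
    intro z
    rcases (by omega : z % 3 = 0 ∨ z % 3 = 1 ∨ z % 3 = 2) with h | h | h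
    · rw [hJ0 z h]; exact hI1sub
    · rw [hJ1 z h]; exact hI2sub
    · rw [hJ2 z h]; exact hI3sub
  have hJU : ∀ z : ℤ, J z ⊆ I1 ∪ I2 ∪ I3 := by
    intro z
    rcases (by omega : z % 3 = 0 ∨ z % 3 = 1 ∨ z % 3 = 2) with h | h | h
    · rw [hJ0 z h]; exact fun x hx => Or.inl (Or.inl hx)
    · rw [hJ1 z h]; exact fun x hx => Or.inl (Or.inr hx)
    · rw [hJ2 z h]; exact fun x hx => Or.inr hx
  have hJcongr : ∀ a b : ℤ, a % 3 = b % 3 → J a = J b := by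
    intro a b h; simp only [hJdef]; rw [h]
  have hJin : ∀ x ∈ I1 ∪ I2 ∪ I3, ∃ c : ℤ, x ∈ J c := by
    rintro x ((h | h) | h)
    · exact ⟨0, by rw [hJ0 0 (by decide)]; exact h⟩
    · exact ⟨1, by rw [hJ1 1 (by decide)]; exact h⟩
    · exact ⟨2, by rw [hJ2 2 (by decide)]; exact h⟩
  have hstep : ∀ z : ℤ, ∀ x ∈ J z, σ x ∈ J (z + 1) := by
    intro z x hx
    rcases (by omega : z % 3 = 0 ∨ z % 3 = 1 ∨ z % 3 = 2) with h | h | h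
    · rw [hJ0 z h] at hx; rw [hJ1 (z + 1) (by omega), ← hm1]; exact ⟨x, hx, rfl⟩
    · rw [hJ1 z h] at hx; rw [hJ2 (z + 1) (by omega), ← hm2]; exact ⟨x, hx, rfl⟩
    · rw [hJ2 z h] at hx; rw [hJ0 (z + 1) (by omega), ← hm3]; exact ⟨x, hx, rfl⟩
  have hstep' : ∀ z : ℤ, ∀ x ∈ J z, σ.symm x ∈ J (z - 1) := by
    intro z x hx
    rcases (by omega : z % 3 = 0 ∨ z % 3 = 1 ∨ z % 3 = 2) with h | h | h
    · rw [hJ0 z h, ← hm3] at hx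
      obtain ⟨w, hw, hwx⟩ := hx
      rw [hJ2 (z - 1) (by omega), ← hwx, Equiv.symm_apply_apply]; exact hw
    · rw [hJ1 z h, ← hm1] at hx
      obtain ⟨w, hw, hwx⟩ := hx
      rw [hJ0 (z - 1) (by omega), ← hwx, Equiv.symm_apply_apply]; exact hw
    · rw [hJ2 z h, ← hm2] at hx
      obtain ⟨w, hw, hwx⟩ := hx
      rw [hJ1 (z - 1) (by omega), ← hwx, Equiv.symm_apply_apply]; exact hw
  have hmain : ∀ c z : ℤ, ∀ x ∈ J c, (σ ^ z) x ∈ J (c + z) := by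
    intro c z
    induction z using Int.induction_on with
    | zero => intro x hx; simpa using hx
    | succ i ih =>
        intro x hx
        have h1 : (σ ^ ((i : ℤ) + 1)) x = σ ((σ ^ (i : ℤ)) x) := by
          rw [add_comm, zpow_add, zpow_one, Equiv.Perm.mul_apply]
        rw [h1, show c + ((i : ℤ) + 1) = (c + i) + 1 by ring]
        exact hstep _ _ (ih x hx)
    | pred i ih =>
        intro x hx
        have h1 : (σ ^ (-(i : ℤ) - 1)) x = σ.symm ((σ ^ (-(i : ℤ))) x) := by
          rw [show -(i : ℤ) - 1 = -1 + -(i : ℤ) by ring, zpow_add, Equiv.Perm.mul_apply,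
            zpow_neg_one]
          rfl
        rw [h1, show c + (-(i : ℤ) - 1) = (c + -(i : ℤ)) - 1 by ring]
        exact hstep' _ _ (ih x hx)
  have hfix1 : ∀ z : ℤ, (σ ^ z) s1 = s1 := fun z => Function.IsFixedPt.perm_zpow hm4 z
  have hfix2 : ∀ z : ℤ, (σ ^ z) s2 = s2 := fun z => Function.IsFixedPt.perm_zpow hm5 z
  have hopinv : ∀ z : ℤ, ∀ x ∈ openPiece N t a0, (σ ^ z) x ∈ openPiece N t a0 := by
    intro z x hx
    rcases hcover x hx with hI | rfl | rfl
    · obtain ⟨c, hc⟩ := hJin x hI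
      exact hJsub _ (hmain c z x hc)
    · rw [hfix1]; exact hs1
    · rw [hfix2]; exact hs2
  have hback : ∀ z : ℤ, ∀ x : ℝ, (σ ^ (-z)) ((σ ^ z) x) = x := by
    intro z x; rw [← Equiv.Perm.mul_apply, ← zpow_add]; simp
  have houtP : ∀ z : ℤ, ∀ x : ℝ, x ∉ openPiece N t a0 → (σ ^ z) x ∉ openPiece N t a0 := by
    intro z x hx hc
    exact hx (by have := hopinv (-z) _ hc; rwa [hback] at this)
  have hs1TS : s1 ∈ Set.range t ∪ ({s1, s2} : Set ℝ) := Or.inr (by simp)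
  have hs2TS : s2 ∈ Set.range t ∪ ({s1, s2} : Set ℝ) := Or.inr (by simp)
  have hsameJ : ∀ c : ℤ, ∀ x y : ℝ, x ∈ J c → y ∈ J c →
      SameGap (Set.range t ∪ ({s1, s2} : Set ℝ)) x y := by
    intro c x y hx hy
    rcases (by omega : c % 3 = 0 ∨ c % 3 = 1 ∨ c % 3 = 2) with h | h | h
    · rw [hJ0 c h] at hx hy; exact hsame x y (Or.inl ⟨hx, hy⟩)
    · rw [hJ1 c h] at hx hy; exact hsame x y (Or.inr (Or.inl ⟨hx, hy⟩))
    · rw [hJ2 c h] at hx hy; exact hsame x y (Or.inr (Or.inr ⟨hx, hy⟩))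
  have hdiffJ : ∀ a b : ℤ, ∀ x y : ℝ, a % 3 ≠ b % 3 → x ∈ J a → y ∈ J b →
      ¬ SameGap (Set.range t ∪ ({s1, s2} : Set ℝ)) x y := by
    intro a b x y hab hx hy
    rcases (by omega : a % 3 = 0 ∨ a % 3 = 1 ∨ a % 3 = 2) with ha | ha | ha <;>
      rcases (by omega : b % 3 = 0 ∨ b % 3 = 1 ∨ b % 3 = 2) with hb | hb | hb
    · exact absurd (ha.trans hb.symm) hab
    · rw [hJ0 a ha] at hx; rw [hJ1 b hb] at hy
      exact hsep_mid s1 hs1TS x y (hb1 x hx) (hb2 y hy).1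
    · rw [hJ0 a ha] at hx; rw [hJ2 b hb] at hy
      exact hsep_mid s1 hs1TS x y (hb1 x hx) (hs12.trans (hb3 y hy))
    · rw [hJ1 a ha] at hx; rw [hJ0 b hb] at hy
      exact fun hg => hsep_mid s1 hs1TS y x (hb1 y hy) (hb2 x hx).1 (sameGap_comm hg)
    · exact absurd (ha.trans hb.symm) hab
    · rw [hJ1 a ha] at hx; rw [hJ2 b hb] at hy
      exact hsep_mid s2 hs2TS x y (hb2 x hx).2 (hb3 y hy)
    · rw [hJ2 a ha] at hx; rw [hJ0 b hb] at hy
      exact fun hg => hsep_mid s1 hs1TS y x (hb1 y hy) (hs12.trans (hb3 x hx)) (sameGap_comm hg)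
    · rw [hJ2 a ha] at hx; rw [hJ1 b hb] at hy
      exact fun hg => hsep_mid s2 hs2TS y x (hb2 y hy).2 (hb3 x hx) (sameGap_comm hg)
    · exact absurd (ha.trans hb.symm) hab
  -- transfer outside the open piece
  have htrans : ∀ x y : ℝ, x ∉ openPiece N t a0 → y ∉ openPiece N t a0 →
      (SameGap (Set.range t) x y ↔ SameGap (Set.range t ∪ ({s1, s2} : Set ℝ)) x y) := by
    intro x y hx hy
    constructor
    · rintro (rfl | ⟨hxt, hyt, hu⟩)
      · exact Or.inl rfl
      · refine Or.inr ⟨?_, ?_, ?_⟩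
        · rintro (h | h)
          · exact hxt h
          · simp only [Set.mem_insert_iff, Set.mem_singleton_iff] at h
            rcases h with rfl | rfl
            exacts [hx hs1, hx hs2]
        · rintro (h | h)
          · exact hyt h
          · simp only [Set.mem_insert_iff, Set.mem_singleton_iff] at h
            rcases h with rfl | rfl
            exacts [hy hs1, hy hs2]
        · rintro u (hr | hsm) hicc
          · exact hu u hr hicc
          · simp only [Set.mem_insert_iff, Set.mem_singleton_iff] at hsm
            have huop : u ∈ openPiece N t a0 := by
              rcases hsm with rfl | rfl; exacts [hs1, hs2]
            obtain ⟨hicc1, hicc2⟩ := hicc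
            have hmin : min x y ∉ openPiece N t a0 := by
              rcases min_cases x y with ⟨h, -⟩ | ⟨h, -⟩ <;> rw [h] <;> assumption
            have h2 : ((min x y : ℝ) : EReal) < tE N t (a0 + 1) :=
              lt_of_le_of_lt (EReal.coe_le_coe_iff.mpr hicc1) huop.2
            have h1 : ¬ (tE N t a0 < ((min x y : ℝ) : EReal)) := fun hcon => hmin ⟨hcon, h2⟩
            have ha1 : 1 ≤ a0 := by
              by_contra h0
              have h00 : a0 = 0 := by omega
              rw [h00, tE_bot] at h1
              exact h1 (EReal.bot_lt_coe _)
            have htEeq := tE_eq a0 ha1 ha0 (by omega)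
            rw [htEeq] at h1
            have hle : min x y ≤ t ⟨a0 - 1, by omega⟩ := EReal.coe_le_coe_iff.mp (not_lt.mp h1)
            have huop1 : ((t ⟨a0 - 1, by omega⟩ : ℝ) : EReal) < (u : EReal) := by
              rw [← htEeq]; exact huop.1
            have hlt : (t ⟨a0 - 1, by omega⟩ : ℝ) < u := EReal.coe_lt_coe_iff.mp huop1
            exact hu (t ⟨a0 - 1, by omega⟩) ⟨_, rfl⟩ ⟨hle, hlt.le.trans hicc2⟩
    · exact sameGap_mono Set.subset_union_left
  -- the Sep part
  have hSep : ∀ n : ℤ,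
      ((3 : ℤ) ∣ n →
        Sep (pcAlgOn (Set.range t ∪ {s1, s2})) σ n = Sep (pcAlgOn (Set.range t)) σ n) ∧
      (¬((3 : ℤ) ∣ n) →
        Sep (pcAlgOn (Set.range t ∪ {s1, s2})) σ n =
          Sep (pcAlgOn (Set.range t)) σ n ∪ (I1 ∪ I2 ∪ I3)) := by
    intro n
    have hyP : ∀ x : ℝ, (σ ^ n)⁻¹ x = (σ ^ (-n)) x := by intro x; rw [zpow_neg]
    have hmove : ∀ c : ℤ, ∀ x ∈ J c, (σ ^ n)⁻¹ x ∈ J (c - n) := by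
      intro c x hx
      rw [hyP]
      have := hmain c (-n) x hx
      rwa [show c + -n = c - n by ring] at this
    have hfixy1 : (σ ^ n)⁻¹ s1 = s1 := by rw [hyP]; exact hfix1 (-n)
    have hfixy2 : (σ ^ n)⁻¹ s2 = s2 := by rw [hyP]; exact hfix2 (-n)
    constructor
    · intro hdvd
      ext x
      rw [mem_sep_iff, mem_sep_iff, not_iff_not]
      by_cases hx : x ∈ openPiece N t a0
      · rcases hcover x hx with hI | rfl | rfl
        · obtain ⟨c, hc⟩ := hJin x hI
          have hy := hmove c x hc
          rw [hJcongr (c - n) c (by omega)] at hy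
          exact iff_of_true (hsameJ c x _ hc hy)
            (sameGap_mono Set.subset_union_left (hsameJ c x _ hc hy))
        · exact iff_of_true (Or.inl hfixy1.symm) (Or.inl hfixy1.symm)
        · exact iff_of_true (Or.inl hfixy2.symm) (Or.inl hfixy2.symm)
      · have hyout : (σ ^ n)⁻¹ x ∉ openPiece N t a0 := by
          rw [hyP]; exact houtP (-n) x hx
        exact (htrans x _ hx hyout).symm
    · intro hnd
      ext x
      rw [mem_sep_iff, Set.mem_union, mem_sep_iff]
      by_cases hx : x ∈ openPiece N t a0
      · rcases hcover x hx with hI | rfl | rfl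
        · apply iff_of_true
          · obtain ⟨c, hc⟩ := hJin x hI
            exact hdiffJ c (c - n) x _ (by omega) hc (hmove c x hc)
          · exact Or.inr hI
        · apply iff_of_false
          · intro hcon; exact hcon (Or.inl hfixy1.symm)
          · rintro (hcon | hmem)
            · exact hcon (Or.inl hfixy1.symm)
            · rcases hmem with (h | h) | h
              · exact absurd (hb1 _ h) (lt_irrefl _)
              · exact absurd (hb2 _ h).1 (lt_irrefl _)
              · exact absurd (hs12.trans (hb3 _ h)) (lt_irrefl _)
        · apply iff_of_false
          · intro hcon; exact hcon (Or.inl hfixy2.symm)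
          · rintro (hcon | hmem)
            · exact hcon (Or.inl hfixy2.symm)
            · rcases hmem with (h | h) | h
              · exact absurd ((hb1 _ h).trans hs12) (lt_irrefl _)
              · exact absurd (hb2 _ h).2 (lt_irrefl _)
              · exact absurd (hb3 _ h) (lt_irrefl _)
      · have hyout : (σ ^ n)⁻¹ x ∉ openPiece N t a0 := by
          rw [hyP]; exact houtP (-n) x hx
        have hiff := htrans x _ hx hyout
        constructor
        · intro hns; exact Or.inl (fun hg => hns (hiff.mp hg))
        · rintro (hns | hmem)
          · exact fun hg => hns (hiff.mpr hg)
          · exact absurd (hUsub hmem) hx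
  refine ⟨hSep, ?_⟩
  rw [commutant_eq_vanish, commutant_eq_vanish]
  ext f
  simp only [Set.mem_setOf_eq, Set.mem_diff]
  constructor
  · rintro ⟨hic, hv⟩
    refine ⟨⟨hic, fun n x hx => ?_⟩, ?_⟩
    · by_cases hdvd : (3 : ℤ) ∣ n
      · exact hv n x (by rw [(hSep n).1 hdvd]; exact hx)
      · exact hv n x (by rw [(hSep n).2 hdvd]; exact Or.inl hx)
    · rintro ⟨n, hnd, hbad⟩
      exact hbad (fun x hx => hv n x (by rw [(hSep n).2 hnd]; exact Or.inr hx))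
  · rintro ⟨⟨hic, hv⟩, hgood⟩
    refine ⟨hic, fun n x hx => ?_⟩
    by_cases hdvd : (3 : ℤ) ∣ n
    · exact hv n x (by rwa [(hSep n).1 hdvd] at hx)
    · rw [(hSep n).2 hdvd] at hx
      rcases hx with hx | hx
      · exact hv n x hx
      · by_contra hne
        exact hgood ⟨n, hdvd, fun hall => hne (hall x hx)⟩

end PaperTRS
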